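/- arXiv:2306.01450 — 6 statements merged into one kernel-verified Lean document; each statement's English description precedes it below -/
import Mathlib

section
/- Let v_0, …, v_M ∈ ℝ^D and suppose the D×M matrix with columns v_h − v_0 (h = 1,…,M) has rank R with 1 ≤ R ≤ D. Then there exists a set I ⊆ {1,…,D} with |I| = R such that, denoting by p_I : ℝ^D → ℝ^R the coordinate projection x ↦ (x_i)_{i∈I} (coordinates listed in increasing index order), the R×M matrix with columns p_I(v_h) − p_I(v_0) (h = 1,…,M) has rank R, and the restriction of p_I to the convex hull of {v_0,…,v_M} is injective; consequently, for every y in the convex hull of {p_I(v_0),…,p_I(v_M)} there exists exactly one x in the convex hull of {v_0,…,v_M} with p_I(x) = y. -/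
open Submodule Set

theorem stmt1 (D M R : ℕ) (hR1 : 1 ≤ R) (hRD : R ≤ D)
    (v : Fin (M + 1) → Fin D → ℝ)
    (hrank : (Matrix.of fun (i : Fin D) (h : Fin M) => v h.succ i - v 0 i).rank = R) :
    ∃ (I : Finset (Fin D)) (hI : I.card = R),
      (Matrix.of fun (r : Fin R) (h : Fin M) =>
          v h.succ (I.orderEmbOfFin hI r) - v 0 (I.orderEmbOfFin hI r)).rank = R ∧
      Set.InjOn (fun (x : Fin D → ℝ) (r : Fin R) => x (I.orderEmbOfFin hI r))
        (convexHull ℝ (Set.range v)) ∧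
      ∀ y ∈ convexHull ℝ (Set.range fun (h : Fin (M + 1)) (r : Fin R) =>
          v h (I.orderEmbOfFin hI r)),
        ∃! x, x ∈ convexHull ℝ (Set.range v) ∧
          (fun r : Fin R => x (I.orderEmbOfFin hI r)) = y := by
  classical
  set A : Matrix (Fin D) (Fin M) ℝ := Matrix.of fun i h => v h.succ i - v 0 i with hAdef
  -- pick a linearly independent spanning subset of the rows
  obtain ⟨s, hs_sub, hs_span, hs_li⟩ := exists_linearIndependent ℝ (Set.range A)
  have hs_fin : s.Finite := (Set.finite_range A).subset hs_sub
  haveI := hs_fin.fintype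
  have hspan_rank : Module.finrank ℝ (span ℝ s) = R := by
    rw [hs_span, show Set.range A = Set.range A.row from rfl, ← Matrix.rank_eq_finrank_span_row, hrank]
  have hscard : s.toFinset.card = R := by
    rw [← finrank_span_set_eq_card hs_li, hspan_rank]
  -- choose row indices
  have hchoice : ∀ w ∈ s, ∃ i : Fin D, A i = w := fun w hw => hs_sub hw
  set g : (Fin M → ℝ) → Fin D := fun w =>
    if h : ∃ i : Fin D, A i = w then h.choose else ⟨0, lt_of_lt_of_le hR1 hRD⟩ with hgdef
  have hg : ∀ w ∈ s, A (g w) = w := by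
    intro w hw
    have h : ∃ i : Fin D, A i = w := hchoice w hw
    simp only [hgdef, dif_pos h]
    exact h.choose_spec
  set I : Finset (Fin D) := s.toFinset.image g with hIdef
  have hginj : Set.InjOn g s.toFinset := by
    intro w hw w' hw' hww'
    have hw2 : w ∈ s := by simpa using hw
    have hw2' : w' ∈ s := by simpa using hw'
    rw [← hg w hw2, ← hg w' hw2', hww']
  have hI : I.card = R := by
    rw [hIdef, Finset.card_image_of_injOn hginj, hscard]
  set e : Fin R → Fin D := fun r => I.orderEmbOfFin hI r with hedef
  have hAIs : A '' ↑I = s := by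
    apply Set.Subset.antisymm
    · rintro _ ⟨i, hi, rfl⟩
      rw [hIdef, Finset.coe_image, Set.coe_toFinset] at hi
      obtain ⟨w, hw, rfl⟩ := hi
      rw [hg w hw]; exact hw
    · intro w hw
      refine ⟨g w, ?_, hg w hw⟩
      rw [hIdef, Finset.coe_image]
      exact ⟨w, by simpa using hw, rfl⟩
  have hrangee : Set.range e = ↑I := by
    rw [hedef]; exact I.range_orderEmbOfFin hI
  -- the submatrix
  set B : Matrix (Fin R) (Fin M) ℝ := Matrix.of fun r h =>
      v h.succ (I.orderEmbOfFin hI r) - v 0 (I.orderEmbOfFin hI r) with hBdef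
  have hBrow : ∀ r, B r = A (e r) := fun r => rfl
  have hrangeB : Set.range B = s := by
    rw [← hAIs, ← hrangee]
    ext w
    constructor
    · rintro ⟨r, rfl⟩; exact ⟨e r, ⟨r, rfl⟩, rfl⟩
    · rintro ⟨_, ⟨r, rfl⟩, rfl⟩; exact ⟨r, rfl⟩
  have hBrank : B.rank = R := by
    rw [Matrix.rank_eq_finrank_span_row, show Set.range B.row = s from hrangeB, hspan_rank]
  -- the projection as a linear map
  set L : (Fin D → ℝ) →ₗ[ℝ] (Fin R → ℝ) := LinearMap.funLeft ℝ ℝ e with hLdef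
  -- column space
  set C : Submodule ℝ (Fin D → ℝ) := LinearMap.range A.mulVecLin with hCdef
  have hCrank : Module.finrank ℝ C = R := by rw [hCdef, ← Matrix.rank, hrank]
  have hBmul : B.mulVecLin = L.comp A.mulVecLin := by
    refine LinearMap.ext fun x => funext fun r => ?_
    rfl
  have hmap : Module.finrank ℝ (C.map L) = R := by
    have : C.map L = LinearMap.range (L.comp A.mulVecLin) := by
      rw [LinearMap.range_comp, hCdef]
    rw [this, ← hBmul, ← Matrix.rank, hBrank]
  have hker : ∀ u ∈ C, L u = 0 → u = 0 := by
    intro u hu hLu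
    set f : C →ₗ[ℝ] (Fin R → ℝ) := L.comp C.subtype with hfdef
    have hrangef : LinearMap.range f = C.map L := by
      rw [hfdef, LinearMap.range_comp, Submodule.range_subtype]
    have hrn := LinearMap.finrank_range_add_finrank_ker f
    rw [hrangef, hmap, hCrank] at hrn
    have hker0 : Module.finrank ℝ (LinearMap.ker f) = 0 := by omega
    have hbot : LinearMap.ker f = ⊥ := Submodule.finrank_eq_zero.mp hker0
    have : (⟨u, hu⟩ : C) ∈ LinearMap.ker f := by
      simp [hfdef, LinearMap.mem_ker, hLu]
    rw [hbot, Submodule.mem_bot] at this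
    exact congrArg Subtype.val this
  -- differences of hull points lie in C
  have hvs : vectorSpan ℝ (Set.range v) ≤ C := by
    rw [vectorSpan_range_eq_span_range_vsub_right ℝ v 0, hCdef, Matrix.range_mulVecLin]
    apply Submodule.span_le.2
    rintro _ ⟨h, rfl⟩
    induction h using Fin.cases with
    | zero => simp [vsub_eq_sub]
    | succ h =>
      apply Submodule.subset_span
      exact ⟨h, funext fun i => (by simp [hAdef, vsub_eq_sub, Matrix.transpose_apply])⟩
  have hdiff : ∀ x ∈ convexHull ℝ (Set.range v), ∀ x' ∈ convexHull ℝ (Set.range v),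
      x - x' ∈ C := by
    intro x hx x' hx'
    have h1 := convexHull_subset_affineSpan (Set.range v) hx
    have h2 := convexHull_subset_affineSpan (Set.range v) hx'
    have := AffineSubspace.vsub_mem_direction h1 h2
    rw [direction_affineSpan] at this
    exact hvs this
  have hinj : Set.InjOn (fun (x : Fin D → ℝ) (r : Fin R) => x (I.orderEmbOfFin hI r))
      (convexHull ℝ (Set.range v)) := by
    intro x hx x' hx' hxy
    have hL : L (x - x') = 0 := by
      rw [map_sub]
      have : L x = L x' := hxy
      rw [this, sub_self]
    have := hker (x - x') (hdiff x hx x' hx') hL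
    exact sub_eq_zero.mp this
  refine ⟨I, hI, hBrank, hinj, ?_⟩
  intro y hy
  have himg : (Set.range fun (h : Fin (M + 1)) (r : Fin R) => v h (I.orderEmbOfFin hI r))
      = L '' (Set.range v) := by
    rw [← Set.range_comp]; rfl
  rw [himg, ← L.image_convexHull] at hy
  obtain ⟨x, hx, rfl⟩ := hy
  refine ⟨x, ⟨hx, rfl⟩, ?_⟩
  rintro z ⟨hz, hze⟩
  exact hinj hz hx hze
end

section
/- Let H ≥ 1 and m be integers with 1 ≤ m < H, and let c_1, …, c_H ∈ ℝ. Then Σ_{h=1}^{H} (−1)^{H−h} Σ_{S ⊆ {1,…,H}, |S| = h} (Σ_{i∈S} c_i)^m = 0, where the inner sum ranges over all subsets S of {1,…,H} of cardinality h. -/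
open Finset

private lemma neg_one_pow_sub_real {a b : ℕ} (h : b ≤ a) :
    (-1 : ℝ) ^ (a - b) = (-1) ^ a * (-1) ^ b := by
  have : a + b = (a - b) + 2 * b := by omega
  rw [← pow_add] at *
  rw [this, pow_add, pow_mul, neg_one_sq, one_pow, mul_one]

private lemma sum_powerset_neg_one_real {α : Type*} [DecidableEq α] {x : Finset α}
    (h0 : x.Nonempty) : (∑ A ∈ x.powerset, (-1 : ℝ) ^ A.card) = 0 := by
  have := Finset.sum_powerset_neg_one_pow_card_of_nonempty (x := x) h0
  have : ((∑ A ∈ x.powerset, (-1 : ℤ) ^ A.card : ℤ) : ℝ) = 0 := by rw [this]; simp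
  push_cast at this
  exact this

private lemma key {α : Type*} [DecidableEq α] {t s : Finset α} (hts : t ⊆ s) (hne : t ≠ s) :
    ∑ A ∈ s.powerset.filter (fun A => t ⊆ A), (-1 : ℝ) ^ (s.card - A.card) = 0 := by
  have h1 : ∑ A ∈ s.powerset.filter (fun A => t ⊆ A), (-1 : ℝ) ^ (s.card - A.card)
      = ∑ B ∈ (s \ t).powerset, (-1 : ℝ) ^ ((s \ t).card - B.card) := by
    refine Finset.sum_nbij' (fun A => A \ t) (fun B => B ∪ t) ?_ ?_ ?_ ?_ ?_
    · intro A hA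
      simp only [mem_filter, mem_powerset] at hA
      exact mem_powerset.2 (sdiff_subset_sdiff hA.1 le_rfl)
    · intro B hB
      simp only [mem_powerset] at hB
      simp only [mem_filter, mem_powerset]
      constructor
      · exact union_subset (hB.trans (sdiff_subset)) hts
      · exact subset_union_right
    · intro A hA
      simp only [mem_filter, mem_powerset] at hA
      exact sdiff_union_of_subset hA.2
    · intro B hB
      simp only [mem_powerset] at hB
      have hd : Disjoint B t := (sdiff_disjoint).mono_left hB
      show (B ∪ t) \ t = B
      rw [union_sdiff_cancel_right hd]
    · intro A hA
      simp only [mem_filter, mem_powerset] at hA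
      congr 1
      rw [card_sdiff_of_subset hA.2, card_sdiff_of_subset hts]
      have h1 := card_le_card hA.1
      have h2 := card_le_card hA.2
      have h3 := card_le_card hts
      omega
  rw [h1]
  have hu : (s \ t).Nonempty := by
    rw [sdiff_nonempty]
    intro h
    exact hne (subset_antisymm hts h)
  have h2 : ∑ B ∈ (s \ t).powerset, (-1 : ℝ) ^ ((s \ t).card - B.card)
      = (-1 : ℝ) ^ (s \ t).card * ∑ B ∈ (s \ t).powerset, (-1 : ℝ) ^ B.card := by
    rw [mul_sum]
    refine sum_congr rfl fun B hB => ?_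
    exact neg_one_pow_sub_real (card_le_card (mem_powerset.1 hB))
  rw [h2, sum_powerset_neg_one_real hu, mul_zero]

theorem stmt6 (H m : ℕ) (hH : 1 ≤ H) (hm1 : 1 ≤ m) (hmH : m < H) (c : Fin H → ℝ) :
    ∑ h ∈ Finset.Icc 1 H, (-1 : ℝ) ^ (H - h) *
      ∑ S ∈ Finset.powersetCard h (Finset.univ : Finset (Fin H)), (∑ i ∈ S, c i) ^ m = 0 := by
  classical
  -- rewrite each outer term as a sum with sign depending on S.card
  have step1 : ∀ h, (-1 : ℝ) ^ (H - h) *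
      ∑ S ∈ Finset.powersetCard h (Finset.univ : Finset (Fin H)), (∑ i ∈ S, c i) ^ m
      = ∑ S ∈ Finset.powersetCard h (Finset.univ : Finset (Fin H)),
          (-1 : ℝ) ^ (H - S.card) * (∑ i ∈ S, c i) ^ m := by
    intro h
    rw [mul_sum]
    refine sum_congr rfl fun S hS => ?_
    rw [(mem_powersetCard.1 hS).2]
  simp only [step1]
  -- extend to h = 0
  have h0term : ∑ S ∈ Finset.powersetCard 0 (Finset.univ : Finset (Fin H)),
      (-1 : ℝ) ^ (H - S.card) * (∑ i ∈ S, c i) ^ m = 0 := by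
    rw [powersetCard_zero, sum_singleton]
    simp [zero_pow (by omega : m ≠ 0)]
  have hrange : Finset.range (H + 1) = insert 0 (Finset.Icc 1 H) := by
    ext x; simp only [mem_range, mem_insert, mem_Icc]; omega
  have step2 : ∑ h ∈ Finset.Icc 1 H, ∑ S ∈ Finset.powersetCard h (Finset.univ : Finset (Fin H)),
      (-1 : ℝ) ^ (H - S.card) * (∑ i ∈ S, c i) ^ m
      = ∑ S ∈ (Finset.univ : Finset (Fin H)).powerset,
          (-1 : ℝ) ^ (H - S.card) * (∑ i ∈ S, c i) ^ m := by
    rw [Finset.sum_powerset, card_univ, Fintype.card_fin, hrange,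
      Finset.sum_insert (by simp), h0term, zero_add]
  rw [step2]
  -- expand the power via functions Fin m → Fin H
  have step3 : ∀ S : Finset (Fin H), (∑ i ∈ S, c i) ^ m
      = ∑ p ∈ Fintype.piFinset (fun _ : Fin m => (Finset.univ : Finset (Fin H))),
          if (∀ j, p j ∈ S) then ∏ j, c (p j) else 0 := by
    intro S
    have e1 : (∑ i ∈ S, c i) ^ m = ∏ _j : Fin m, ∑ i ∈ S, c i := by
      rw [prod_const, card_univ, Fintype.card_fin]
    rw [e1, Finset.prod_univ_sum]
    rw [← Finset.sum_filter]
    refine (Finset.sum_congr ?_ fun p _ => rfl)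
    ext p
    simp [Fintype.mem_piFinset]
  simp only [step3, Finset.mul_sum]
  rw [Finset.sum_comm]
  refine Finset.sum_eq_zero fun p _ => ?_
  -- inner sum over S vanishes
  have e2 : ∑ S ∈ (Finset.univ : Finset (Fin H)).powerset,
      (-1 : ℝ) ^ (H - S.card) * (if (∀ j, p j ∈ S) then ∏ j, c (p j) else 0)
      = (∑ S ∈ (Finset.univ : Finset (Fin H)).powerset.filter
          (fun S => Finset.image p Finset.univ ⊆ S), (-1 : ℝ) ^ (H - S.card)) * ∏ j, c (p j) := by
    rw [Finset.sum_mul, Finset.sum_filter]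
    refine sum_congr rfl fun S _ => ?_
    by_cases hc : ∀ j, p j ∈ S
    · rw [if_pos hc, if_pos (by rw [Finset.image_subset_iff]; exact fun x _ => hc x)]
    · have h' : ¬ (Finset.image p Finset.univ ⊆ S) := by
        rw [Finset.image_subset_iff]
        exact fun h => hc fun j => h j (mem_univ j)
      rw [if_neg hc, if_neg h', mul_zero]
  rw [e2]
  have hsub : Finset.image p Finset.univ ⊆ (Finset.univ : Finset (Fin H)) := subset_univ _
  have hne : Finset.image p Finset.univ ≠ (Finset.univ : Finset (Fin H)) := by
    intro h
    have h1 : (Finset.image p Finset.univ).card ≤ m := by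
      calc (Finset.image p Finset.univ).card ≤ (Finset.univ : Finset (Fin m)).card :=
        card_image_le
      _ = m := by simp
    rw [h] at h1
    simp at h1
    omega
  have := key hsub hne
  rw [card_univ, Fintype.card_fin] at this
  rw [this, zero_mul]
end

section
/- Let H ≥ 0 be an integer, s ≥ 0, and p_0, …, p_H ≥ 0 reals. Then the series Σ_{n=H}^{∞} e^{−s} (s^n/n!) · [ Σ_{(n_0,…,n_H)} ((n+1)!/(n_0!⋯n_H!)) p_0^{n_0}⋯p_H^{n_H} ] converges, where for each n the inner sum ranges over all (H+1)-tuples of positive integers n_0,…,n_H ≥ 1 with n_0+⋯+n_H = n+1, and its value equals Σ_{h=1}^{H+1} (−1)^{H+1−h} Σ_{S ⊆ {0,…,H}, |S| = h} (Σ_{i∈S} p_i) e^{−s(1 − Σ_{i∈S} p_i)}. -/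
open Finset

lemma supIE {α : Type*} [Fintype α] [DecidableEq α] (T : Finset α) :
    ∑ S ∈ (univ : Finset α).powerset.filter (fun S => T ⊆ S),
      (-1 : ℝ) ^ (Sᶜ.card) = if T = univ then 1 else 0 := by
  have key : ∑ S ∈ (univ : Finset α).powerset.filter (fun S => T ⊆ S), (-1:ℝ)^(Sᶜ.card)
      = ∑ R ∈ Tᶜ.powerset, (-1:ℝ)^R.card := by
    apply sum_nbij' (fun S => Sᶜ) (fun R => Rᶜ)
    · intro S hS
      simp only [mem_filter, mem_powerset] at hS ⊢
      exact compl_subset_compl.2 hS.2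
    · intro R hR
      simp only [mem_powerset] at hR
      simp only [mem_filter, mem_powerset]
      exact ⟨subset_univ _, by simpa using compl_subset_compl.2 hR⟩
    · intro S _; simp
    · intro R _; simp
    · intro S _; rfl
  rw [key]
  have : (∑ R ∈ Tᶜ.powerset, (-1:ℤ)^R.card) = if Tᶜ = ∅ then 1 else 0 :=
    sum_powerset_neg_one_pow_card
  have h2 := congrArg (fun z : ℤ => (z : ℝ)) this
  push_cast at h2
  rw [h2]
  congr 1
  rw [eq_comm, compl_eq_empty_iff]

lemma multi_ext {α : Type*} [Fintype α] [DecidableEq α] (S : Finset α) (k : α → ℕ)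
    (h : ∀ i, k i ≠ 0 → i ∈ S) : Nat.multinomial S k = Nat.multinomial univ k := by
  have hz : ∀ i ∈ (univ : Finset α), i ∉ S → k i = 0 := fun i _ hi => by
    by_contra hne; exact hi (h i hne)
  unfold Nat.multinomial
  rw [sum_subset (subset_univ S) hz, prod_subset (subset_univ S)
    (fun i hi hiS => by rw [hz i hi hiS]; rfl)]

lemma comb (H : ℕ) (p : Fin (H+1) → ℝ) (n : ℕ) :
    (∑ m ∈ (Fintype.piFinset fun _ : Fin (H + 1) => Finset.Icc 1 (n + 1)).filter
        (fun m => ∑ i, m i = n + 1),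
      (Nat.multinomial Finset.univ m : ℝ) * ∏ i, p i ^ m i)
    = ∑ S ∈ (univ : Finset (Fin (H+1))).powerset,
        (-1 : ℝ) ^ (H + 1 - S.card) * (∑ i ∈ S, p i) ^ (n + 1) := by
  classical
  set g : (Fin (H+1) → ℕ) → ℝ := fun k => (Nat.multinomial univ k : ℝ) * ∏ i, p i ^ k i with hg
  have hS : ∀ S : Finset (Fin (H+1)), (∑ i ∈ S, p i) ^ (n + 1)
      = ∑ k ∈ (piAntidiag (univ : Finset (Fin (H+1))) (n+1)).filter
          (fun k => ∀ i, k i ≠ 0 → i ∈ S), g k := by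
    intro S
    rw [Finset.sum_pow_eq_sum_piAntidiag]
    have hset : (piAntidiag (univ : Finset (Fin (H+1))) (n+1)).filter
        (fun k => ∀ i, k i ≠ 0 → i ∈ S) = piAntidiag S (n+1) := by
      ext k
      simp only [mem_filter, mem_piAntidiag]
      constructor
      · rintro ⟨⟨hsum, -⟩, h⟩
        exact ⟨by rw [← hsum]; exact (sum_subset (subset_univ S)
          (fun i _ hi => by by_contra hne; exact hi (h i hne))), h⟩
      · rintro ⟨hsum, h⟩
        exact ⟨⟨by rw [← hsum]; exact (sum_subset (subset_univ S)
          (fun i _ hi => by by_contra hne; exact hi (h i hne))).symm,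
          fun i _ => mem_univ i⟩, h⟩
    rw [hset]
    refine sum_congr rfl fun k hk => ?_
    rw [mem_piAntidiag] at hk
    rw [hg]
    simp only
    rw [multi_ext S k hk.2, prod_subset (subset_univ S)
      (fun i _ hi => by have : k i = 0 := by by_contra hne; exact hi (hk.2 i hne)
                        rw [this, pow_zero])]
  calc ∑ m ∈ (Fintype.piFinset fun _ : Fin (H + 1) => Finset.Icc 1 (n + 1)).filter
        (fun m => ∑ i, m i = n + 1),
      (Nat.multinomial Finset.univ m : ℝ) * ∏ i, p i ^ m i
      = ∑ k ∈ (piAntidiag (univ : Finset (Fin (H+1))) (n+1)).filter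
          (fun k => ∀ i, k i ≠ 0), g k := by
        apply sum_congr _ fun _ _ => rfl
        ext m
        simp only [mem_filter, Fintype.mem_piFinset, mem_Icc, mem_piAntidiag]
        constructor
        · rintro ⟨h1, h2⟩
          exact ⟨⟨h2, fun i _ => mem_univ i⟩, fun i => Nat.one_le_iff_ne_zero.1 (h1 i).1⟩
        · rintro ⟨⟨h1, -⟩, h2⟩
          refine ⟨fun i => ⟨Nat.one_le_iff_ne_zero.2 (h2 i), ?_⟩, h1⟩
          rw [← h1]
          exact single_le_sum (f := m) (fun j _ => Nat.zero_le _) (mem_univ i)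
    _ = ∑ k ∈ piAntidiag (univ : Finset (Fin (H+1))) (n+1),
          (if (∀ i, k i ≠ 0) then (1:ℝ) else 0) * g k := by
        rw [sum_filter]
        exact sum_congr rfl fun k _ => by split_ifs <;> simp
    _ = ∑ k ∈ piAntidiag (univ : Finset (Fin (H+1))) (n+1),
          (∑ S ∈ (univ : Finset (Fin (H+1))).powerset.filter
            (fun S => univ.filter (fun i => k i ≠ 0) ⊆ S), (-1:ℝ)^(Sᶜ.card)) * g k := by
        refine sum_congr rfl fun k _ => ?_
        rw [supIE]
        congr 1
        rw [eq_comm]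
        congr 1
        simp [Finset.eq_univ_iff_forall, Finset.filter_eq_self]
    _ = ∑ S ∈ (univ : Finset (Fin (H+1))).powerset,
        (-1 : ℝ) ^ (H + 1 - S.card) * (∑ i ∈ S, p i) ^ (n + 1) := by
        simp_rw [sum_mul, sum_filter, hS, mul_sum, sum_filter]
        rw [sum_comm]
        refine sum_congr rfl fun S _ => sum_congr rfl fun k _ => ?_
        have hc : (Sᶜ.card : ℕ) = H + 1 - S.card := by
          rw [card_compl]; simp
        rw [hc]
        have hcond : (univ.filter (fun i => k i ≠ 0) ⊆ S) ↔ ∀ i, k i ≠ 0 → i ∈ S := by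
          simp [Finset.subset_iff]
        simp only [show (univ.filter (fun i => k i ≠ 0) ⊆ S) = ∀ i, k i ≠ 0 → i ∈ S from
          propext hcond]

lemma expHS (s t : ℝ) :
    HasSum (fun n : ℕ => Real.exp (-s) * (s ^ n / (n.factorial : ℝ)) * t ^ (n + 1))
      (t * Real.exp (-s * (1 - t))) := by
  have h := (NormedSpace.expSeries_div_hasSum_exp (s * t)).mul_left (Real.exp (-s) * t)
  have he : NormedSpace.exp (s * t) = Real.exp (s * t) := by rw [Real.exp_eq_exp_ℝ]
  rw [he] at h
  replace h : HasSum (fun i : ℕ => Real.exp (-s) * t * ((s * t) ^ i / (i.factorial : ℝ)))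
      (Real.exp (-s) * t * Real.exp (s * t)) := h
  convert h using 1
  · funext n
    rw [mul_pow, pow_succ]
    ring
  · rw [show -s * (1 - t) = -s + s * t by ring, Real.exp_add]
    ring

theorem stmt9 (H : ℕ) (s : ℝ) (hs : 0 ≤ s)
    (p : Fin (H + 1) → ℝ) (hp : ∀ i, 0 ≤ p i) :
    HasSum
      (fun n : ℕ => Real.exp (-s) * (s ^ n / (n.factorial : ℝ)) *
        ∑ m ∈ (Fintype.piFinset fun _ : Fin (H + 1) => Finset.Icc 1 (n + 1)).filter
            (fun m => ∑ i, m i = n + 1),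
          (Nat.multinomial Finset.univ m : ℝ) * ∏ i, p i ^ m i)
      (∑ h ∈ Finset.Icc 1 (H + 1), (-1 : ℝ) ^ (H + 1 - h) *
        ∑ S ∈ Finset.powersetCard h (Finset.univ : Finset (Fin (H + 1))),
          (∑ i ∈ S, p i) * Real.exp (-s * (1 - ∑ i ∈ S, p i))) := by
  classical
  have hsum : HasSum
      (fun n : ℕ => ∑ S ∈ (univ : Finset (Fin (H+1))).powerset,
        (-1:ℝ)^(H+1-S.card) * (Real.exp (-s) * (s ^ n / (n.factorial : ℝ)) *
          (∑ i ∈ S, p i) ^ (n+1)))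
      (∑ S ∈ (univ : Finset (Fin (H+1))).powerset,
        (-1:ℝ)^(H+1-S.card) * ((∑ i ∈ S, p i) * Real.exp (-s * (1 - ∑ i ∈ S, p i)))) :=
    hasSum_sum fun S _ => (expHS s _).mul_left _
  convert hsum using 1
  · funext n
    rw [comb, mul_sum]
    exact sum_congr rfl fun S _ => by ring
  · rw [sum_powerset]
    have hcu : (univ : Finset (Fin (H+1))).card = H + 1 := by simp
    rw [hcu]
    have hterm : ∀ j, ∑ S ∈ powersetCard j (univ : Finset (Fin (H+1))),
        (-1:ℝ)^(H+1-S.card) * ((∑ i ∈ S, p i) * Real.exp (-s * (1 - ∑ i ∈ S, p i)))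
        = (-1:ℝ)^(H+1-j) * ∑ S ∈ powersetCard j (univ : Finset (Fin (H+1))),
          (∑ i ∈ S, p i) * Real.exp (-s * (1 - ∑ i ∈ S, p i)) := by
      intro j
      rw [mul_sum]
      exact sum_congr rfl fun S hS => by rw [(mem_powersetCard.1 hS).2]
    simp_rw [hterm]
    rw [Finset.sum_range_succ']
    simp only [powersetCard_zero, sum_singleton, sum_empty, zero_mul, mul_zero, add_zero]
    rw [← Finset.Ico_add_one_right_eq_Icc, Finset.sum_Ico_eq_sum_range]
    simp [add_comm]
end

section
/- Let D ≥ 0 be an integer, s ≥ 0, and p_0, …, p_D ≥ 0 reals with p_0 + ⋯ + p_D = 1. Then e^{−s} Σ_{h=0}^{D} p_h e^{s p_h} ∏_{j=0, j≠h}^{D} (e^{s p_j} − 1) = 1 − Σ_{h=1}^{D} (−1)^{D−h} Σ_{S ⊆ {0,…,D}, |S| = h} (Σ_{i∈S} p_i) e^{−s(1 − Σ_{i∈S} p_i)}. -/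
open Finset in
lemma swap_sum {n : ℕ} (p : Fin n → ℝ) (C : Finset (Fin n) → ℝ) :
    ∑ h : Fin n, ∑ t ∈ (Finset.univ.erase h).powerset, p h * C (insert h t)
    = ∑ S ∈ (Finset.univ : Finset (Fin n)).powerset, (∑ h ∈ S, p h) * C S := by
  have hrw : ∀ S ∈ (Finset.univ : Finset (Fin n)).powerset,
      (∑ h ∈ S, p h) * C S = ∑ h ∈ S, p h * C S := by
    intro S _; rw [Finset.sum_mul]
  rw [Finset.sum_congr rfl hrw]
  rw [Finset.sum_sigma', Finset.sum_sigma']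
  refine Finset.sum_nbij' (fun a => ⟨insert a.1 a.2, a.1⟩) (fun b => ⟨b.2, b.1.erase b.2⟩)
    ?_ ?_ ?_ ?_ ?_
  · rintro ⟨h, t⟩ ha
    simp only [Finset.mem_sigma, Finset.mem_powerset] at ha ⊢
    exact ⟨Finset.subset_univ _, Finset.mem_insert_self _ _⟩
  · rintro ⟨S, h⟩ hb
    simp only [Finset.mem_sigma, Finset.mem_powerset, Finset.mem_univ, true_and] at hb ⊢
    exact Finset.erase_subset_erase _ (Finset.subset_univ _)
  · rintro ⟨h, t⟩ ha
    simp only [Finset.mem_sigma, Finset.mem_univ, Finset.mem_powerset, true_and] at ha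
    have hnt : h ∉ t := fun hc => (Finset.mem_erase.mp (ha hc)).1 rfl
    simp [Finset.erase_insert hnt]
  · rintro ⟨S, h⟩ hb
    simp only [Finset.mem_sigma, Finset.mem_powerset] at hb
    simp [Finset.insert_erase hb.2]
  · rintro ⟨h, t⟩ _; rfl

theorem stmt12 (D : ℕ) (s : ℝ) (hs : 0 ≤ s)
    (p : Fin (D + 1) → ℝ) (hp : ∀ i, 0 ≤ p i) (hsum : ∑ i, p i = 1) :
    Real.exp (-s) * ∑ h : Fin (D + 1), p h * Real.exp (s * p h) *
        ∏ j ∈ Finset.univ.erase h, (Real.exp (s * p j) - 1) =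
    1 - ∑ h ∈ Finset.Icc 1 D, (-1 : ℝ) ^ (D - h) *
      ∑ S ∈ Finset.powersetCard h (Finset.univ : Finset (Fin (D + 1))),
        (∑ i ∈ S, p i) * Real.exp (-s * (1 - ∑ i ∈ S, p i)) := by
  classical
  set C : Finset (Fin (D + 1)) → ℝ :=
    fun S => (-1 : ℝ) ^ (D + 1 - S.card) * Real.exp (s * ∑ i ∈ S, p i) with hC
  have hcu : (Finset.univ : Finset (Fin (D + 1))).card = D + 1 := by simp
  -- Step 1: expand each product
  have step1 : ∀ h : Fin (D + 1),
      p h * Real.exp (s * p h) * ∏ j ∈ Finset.univ.erase h, (Real.exp (s * p j) - 1)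
      = ∑ t ∈ (Finset.univ.erase h).powerset, p h * C (insert h t) := by
    intro h
    have hcard : (Finset.univ.erase h).card = D := by
      simp [Finset.card_erase_of_mem]
    have hexp : ∀ j ∈ Finset.univ.erase h,
        Real.exp (s * p j) - 1 = Real.exp (s * p j) + (-1) := by
      intro j _; ring
    rw [Finset.prod_congr rfl hexp, Finset.prod_add, Finset.mul_sum]
    refine Finset.sum_congr rfl ?_
    intro t ht
    rw [Finset.mem_powerset] at ht
    have hnt : h ∉ t := fun hc => (Finset.mem_erase.mp (ht hc)).1 rfl
    have hct : t.card ≤ D := le_of_le_of_eq (Finset.card_le_card ht) hcard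
    have hprod : ∏ x ∈ t, Real.exp (s * p x) = Real.exp (s * ∑ x ∈ t, p x) := by
      rw [← Real.exp_sum, Finset.mul_sum]
    rw [hC]
    simp only
    rw [Finset.prod_const, Finset.card_sdiff_of_subset ht, hcard, hprod,
      Finset.card_insert_of_notMem hnt, Finset.sum_insert hnt,
      show D + 1 - (t.card + 1) = D - t.card by omega, mul_add, Real.exp_add]
    ring
  rw [Finset.sum_congr rfl (fun h _ => step1 h), swap_sum, Finset.sum_powerset, hcu]
  rw [Finset.sum_range_succ, Finset.sum_range_succ']
  have hsel : Finset.powersetCard (D + 1) (Finset.univ : Finset (Fin (D + 1)))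
      = {Finset.univ} := by
    simpa using Finset.powersetCard_self (Finset.univ : Finset (Fin (D + 1)))
  have h0 : ∑ S ∈ Finset.powersetCard 0 (Finset.univ : Finset (Fin (D + 1))),
      (∑ h ∈ S, p h) * C S = 0 := by
    simp [Finset.powersetCard_zero]
  have htop : ∑ S ∈ ({Finset.univ} : Finset (Finset (Fin (D + 1)))),
      (∑ h ∈ S, p h) * C S = Real.exp s := by
    simp [hC, hsum, hcu]
  rw [h0, add_zero, hsel, htop]
  have hIcc : ∑ h ∈ Finset.Icc 1 D, (-1 : ℝ) ^ (D - h) *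
      ∑ S ∈ Finset.powersetCard h (Finset.univ : Finset (Fin (D + 1))),
        (∑ i ∈ S, p i) * Real.exp (-s * (1 - ∑ i ∈ S, p i))
      = ∑ k ∈ Finset.range D, (-1 : ℝ) ^ (D - (1 + k)) *
      ∑ S ∈ Finset.powersetCard (1 + k) (Finset.univ : Finset (Fin (D + 1))),
        (∑ i ∈ S, p i) * Real.exp (-s * (1 - ∑ i ∈ S, p i)) := by
    rw [← Finset.Ico_add_one_right_eq_Icc, Finset.sum_Ico_eq_sum_range]
    simp
  rw [hIcc]
  have key : ∀ k ∈ Finset.range D,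
      Real.exp (-s) * ∑ t ∈ Finset.powersetCard (k + 1)
        (Finset.univ : Finset (Fin (D + 1))), (∑ h ∈ t, p h) * C t
      = -((-1 : ℝ) ^ (D - (1 + k)) *
        ∑ S ∈ Finset.powersetCard (1 + k) (Finset.univ : Finset (Fin (D + 1))),
          (∑ i ∈ S, p i) * Real.exp (-s * (1 - ∑ i ∈ S, p i))) := by
    intro k hk
    rw [Finset.mem_range] at hk
    rw [show 1 + k = k + 1 by ring, Finset.mul_sum, Finset.mul_sum, ← Finset.sum_neg_distrib]
    refine Finset.sum_congr rfl ?_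
    intro S hS
    have hSc : S.card = k + 1 := (Finset.mem_powersetCard.mp hS).2
    have hq : Real.exp (-s * (1 - ∑ i ∈ S, p i))
        = Real.exp (-s) * Real.exp (s * ∑ i ∈ S, p i) := by
      rw [← Real.exp_add]; congr 1; ring
    rw [hC]
    simp only
    rw [hSc, show D + 1 - (k + 1) = (D - (1 + k)) + 1 by omega, pow_succ, hq]
    ring
  rw [mul_add, ← Real.exp_add, neg_add_cancel, Real.exp_zero,
    Finset.mul_sum, Finset.sum_congr rfl key, Finset.sum_neg_distrib]
  ring
end

section
/- Let D ≥ 0 be an integer and c_0, …, c_D ≥ 0 reals. Then the series Σ_{(m_0,…,m_D)} (m_0 + ⋯ + m_D + D + 1)! ∏_{h=0}^{D} c_h^{m_h} / (m_h! (m_h + 1)!), where the sum ranges over all (D+1)-tuples of nonnegative integers m_0,…,m_D ≥ 0, converges, and its value equals the (finite) Lebesgue integral ∫_0^∞ e^{−w} w^{D+1} ∏_{h=0}^{D} ( Σ_{m=0}^{∞} (c_h w)^m / (m! (m+1)!) ) dw. -/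
set_option maxHeartbeats 800000

open MeasureTheory

lemma aux_norm_le (x : ℝ) (m : ℕ) :
    ‖x ^ m / ((m.factorial : ℝ) * ((m + 1).factorial : ℝ))‖ ≤ |x| ^ m / m.factorial := by
  have h1 : (0:ℝ) < m.factorial := by exact_mod_cast m.factorial_pos
  have h2 : (0:ℝ) < (m+1).factorial := by exact_mod_cast (m+1).factorial_pos
  rw [Real.norm_eq_abs, abs_div, abs_pow, abs_of_pos (mul_pos h1 h2)]
  gcongr
  exact le_mul_of_one_le_right h1.le
    (by exact_mod_cast Nat.one_le_iff_ne_zero.mpr (m+1).factorial_ne_zero)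

lemma aux_summable (x : ℝ) :
    Summable (fun m : ℕ => x ^ m / ((m.factorial : ℝ) * ((m + 1).factorial : ℝ))) := by
  apply Summable.of_norm
  exact Summable.of_nonneg_of_le (fun m => norm_nonneg _) (fun m => aux_norm_le x m)
    (Real.summable_pow_div_factorial |x|)

lemma fact_bound' : ∀ (k : ℕ) (ν : Fin k → ℕ),
    (∑ i, ν i).factorial ≤ (2 ^ k) ^ (∑ i, ν i) * ∏ i, (ν i).factorial := by
  intro k
  induction k with
  | zero => intro ν; simp
  | succ n ih =>
    intro ν
    rw [Fin.sum_univ_succ, Fin.prod_univ_succ]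
    set a := ν 0 with ha
    set b := ∑ i : Fin n, ν i.succ with hb
    have hch : (a + b).choose b ≤ 2 ^ (a + b) := by
      calc (a+b).choose b ≤ ∑ m ∈ Finset.range (a+b+1), (a+b).choose m :=
            Finset.single_le_sum (fun i _ => Nat.zero_le _) (Finset.mem_range.mpr (by omega))
        _ = 2 ^ (a+b) := Nat.sum_range_choose _
    have h1 : (a + b).factorial ≤ 2 ^ (a + b) * (a.factorial * b.factorial) := by
      calc (a + b).factorial = (a+b).choose b * a.factorial * b.factorial :=
            (Nat.add_choose_mul_factorial_mul_factorial a b).symm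
        _ ≤ 2 ^ (a+b) * a.factorial * b.factorial := by
            exact Nat.mul_le_mul_right _ (Nat.mul_le_mul_right _ hch)
        _ = 2 ^ (a+b) * (a.factorial * b.factorial) := by ring
    have h2 := ih (fun i => ν i.succ)
    calc (a + b).factorial ≤ 2 ^ (a+b) * (a.factorial * b.factorial) := h1
      _ ≤ 2 ^ (a+b) * (a.factorial * ((2^n)^b * ∏ i : Fin n, (ν i.succ).factorial)) :=
          Nat.mul_le_mul_left _ (Nat.mul_le_mul_left _ h2)
      _ = 2 ^ (a+b) * (2^n)^b * (a.factorial * ∏ i : Fin n, (ν i.succ).factorial) := by ring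
      _ ≤ 2 ^ (a+b) * (2^n)^(a+b) * (a.factorial * ∏ i : Fin n, (ν i.succ).factorial) :=
          Nat.mul_le_mul_right _ (Nat.mul_le_mul_left _
            (Nat.pow_le_pow_right (Nat.pow_pos (by norm_num)) (by omega)))
      _ = (2 ^ (n+1)) ^ (a + b) * (a.factorial * ∏ i : Fin n, (ν i.succ).factorial) := by
          rw [pow_succ, mul_pow]; ring

lemma T_le (D : ℕ) (c : Fin (D + 1) → ℝ) (hc : ∀ i, 0 ≤ c i) (m : Fin (D + 1) → ℕ) :
    (((∑ h, m h) + D + 1).factorial : ℝ) *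
        ∏ h, c h ^ m h / (((m h).factorial : ℝ) * ((m h + 1).factorial : ℝ)) ≤
      (2:ℝ) ^ ((D+1)*(D+1)) * ∏ h, ((2:ℝ) ^ (D+1) * c h) ^ m h / ((m h).factorial : ℝ) := by
  have hnat := fact_bound' (D+1) (fun h => m h + 1)
  have hsum1 : (∑ h : Fin (D+1), (m h + 1)) = (∑ h, m h) + (D + 1) := by
    rw [Finset.sum_add_distrib]
    simp
  rw [hsum1] at hnat
  set S := ∑ h, m h with hS
  have hR : ((S + (D+1)).factorial : ℝ) ≤
      ((2:ℝ) ^ (D+1)) ^ (S + (D+1)) * ∏ h, ((m h + 1).factorial : ℝ) := by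
    exact_mod_cast hnat
  have hprod_nonneg : (0:ℝ) ≤ ∏ h, c h ^ m h / (((m h).factorial : ℝ) * ((m h + 1).factorial : ℝ)) :=
    Finset.prod_nonneg fun h _ => div_nonneg (pow_nonneg (hc h) _) (by positivity)
  have hSD : S + D + 1 = S + (D + 1) := by omega
  calc (((S + D + 1).factorial : ℝ)) * ∏ h, c h ^ m h / (((m h).factorial : ℝ) * ((m h + 1).factorial : ℝ))
      ≤ (((2:ℝ) ^ (D+1)) ^ (S + (D+1)) * ∏ h, ((m h + 1).factorial : ℝ)) *
          ∏ h, c h ^ m h / (((m h).factorial : ℝ) * ((m h + 1).factorial : ℝ)) := by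
        apply mul_le_mul_of_nonneg_right _ hprod_nonneg
        rw [hSD]; exact hR
    _ = (2:ℝ) ^ ((D+1)*(D+1)) * ∏ h, ((2:ℝ) ^ (D+1) * c h) ^ m h / ((m h).factorial : ℝ) := by
        have e1 : (∏ h : Fin (D+1), (((m h + 1).factorial : ℝ) *
            (c h ^ m h / (((m h).factorial : ℝ) * ((m h + 1).factorial : ℝ)))))
            = ∏ h : Fin (D+1), c h ^ m h / ((m h).factorial : ℝ) := by
          refine Finset.prod_congr rfl fun h _ => ?_
          have h1 : ((m h).factorial : ℝ) ≠ 0 := Nat.cast_ne_zero.mpr (m h).factorial_ne_zero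
          have h2 : ((m h + 1).factorial : ℝ) ≠ 0 := Nat.cast_ne_zero.mpr (m h + 1).factorial_ne_zero
          field_simp
        have e2 : (∏ h : Fin (D+1), ((2:ℝ)^(D+1) * c h) ^ m h / ((m h).factorial : ℝ))
            = (∏ h : Fin (D+1), (((2:ℝ)^(D+1)) ^ m h)) *
              ∏ h : Fin (D+1), c h ^ m h / ((m h).factorial : ℝ) := by
          rw [← Finset.prod_mul_distrib]
          refine Finset.prod_congr rfl fun h _ => ?_
          rw [mul_pow]; ring
        rw [mul_assoc, ← Finset.prod_mul_distrib, e1, e2, pow_add,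
          ← Finset.prod_pow_eq_pow_sum (f := m) (a := (2:ℝ)^(D+1)), ← pow_mul]
        ring

lemma hasSum_pi_prod' : ∀ {k : ℕ} (f : Fin k → ℕ → ℝ),
    (∀ i m, 0 ≤ f i m) → (∀ i, Summable (f i)) →
    HasSum (fun m : Fin k → ℕ => ∏ i, f i (m i)) (∏ i, ∑' m, f i m) := by
  intro k
  induction k with
  | zero =>
    intro f _ _
    have := hasSum_single (f := fun m : Fin 0 → ℕ => ∏ i, f i (m i)) default
      (fun b hb => absurd (Subsingleton.elim b default) hb)
    simpa using this
  | succ n ih =>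
    intro f hpos hsum
    have hrest := ih (fun i => f i.succ) (fun i m => hpos _ _) (fun i => hsum _)
    have h0 := (hsum 0).hasSum
    have hs2 := hrest.summable
    have hsummable := Summable.mul_of_nonneg (hsum 0) hs2 (fun m => hpos 0 m)
      (fun p => Finset.prod_nonneg fun i _ => hpos _ _)
    have hmul := h0.mul hrest hsummable
    have key : ((fun m : Fin (n+1) → ℕ => ∏ i, f i (m i)) ∘ (Fin.consEquiv fun _ => ℕ)) =
        fun p : ℕ × (Fin n → ℕ) => f 0 p.1 * ∏ i, f i.succ (p.2 i) := by
      funext p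
      simp [Fin.consEquiv, Fin.prod_univ_succ]
    rw [Fin.prod_univ_succ]
    refine (Equiv.hasSum_iff (Fin.consEquiv fun _ => ℕ)).mp ?_
    rw [key]
    exact hmul

lemma T_summable (D : ℕ) (c : Fin (D + 1) → ℝ) (hc : ∀ i, 0 ≤ c i) :
    Summable (fun m : Fin (D + 1) → ℕ =>
      (((∑ h, m h) + D + 1).factorial : ℝ) *
        ∏ h, c h ^ m h / (((m h).factorial : ℝ) * ((m h + 1).factorial : ℝ))) := by
  have hg : Summable (fun m : Fin (D + 1) → ℕ =>
      (2:ℝ) ^ ((D+1)*(D+1)) * ∏ h, ((2:ℝ) ^ (D+1) * c h) ^ m h / ((m h).factorial : ℝ)) := by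
    apply Summable.mul_left
    refine (hasSum_pi_prod' (fun h => fun m : ℕ => ((2:ℝ)^(D+1) * c h) ^ m / (m.factorial : ℝ))
      (fun h m => ?_) (fun h => Real.summable_pow_div_factorial _)).summable
    have h0 : (0:ℝ) ≤ (2:ℝ)^(D+1) * c h := mul_nonneg (by positivity) (hc h)
    exact div_nonneg (pow_nonneg h0 m) (Nat.cast_nonneg _)
  refine Summable.of_nonneg_of_le (fun m => ?_) (fun m => T_le D c hc m) hg
  exact mul_nonneg (Nat.cast_nonneg _)
    (Finset.prod_nonneg fun h _ => div_nonneg (pow_nonneg (hc h) _) (by positivity))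

lemma pt_hasSum (D : ℕ) (c : Fin (D + 1) → ℝ) (hc : ∀ i, 0 ≤ c i) (w : ℝ) (hw : 0 ≤ w) :
    HasSum
      (fun m : Fin (D + 1) → ℕ => Real.exp (-w) * w ^ ((∑ h, m h) + D + 1) *
        ∏ h, c h ^ m h / (((m h).factorial : ℝ) * ((m h + 1).factorial : ℝ)))
      (Real.exp (-w) * w ^ (D + 1) *
        ∏ h : Fin (D + 1), ∑' m : ℕ, (c h * w) ^ m /
          ((m.factorial : ℝ) * ((m + 1).factorial : ℝ))) := by
  have H := hasSum_pi_prod' (fun h => fun m : ℕ => (c h * w) ^ m /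
      ((m.factorial : ℝ) * ((m + 1).factorial : ℝ)))
    (fun h m => by
      have h0 : (0:ℝ) ≤ c h * w := mul_nonneg (hc h) hw
      exact div_nonneg (pow_nonneg h0 m) (by positivity))
    (fun h => aux_summable _)
  have H2 := H.mul_left (Real.exp (-w) * w ^ (D + 1))
  have key : (fun m : Fin (D + 1) → ℕ => Real.exp (-w) * w ^ (D + 1) *
      ∏ h, (c h * w) ^ m h / (((m h).factorial : ℝ) * ((m h + 1).factorial : ℝ)))
      = fun m : Fin (D + 1) → ℕ => Real.exp (-w) * w ^ ((∑ h, m h) + D + 1) *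
        ∏ h, c h ^ m h / (((m h).factorial : ℝ) * ((m h + 1).factorial : ℝ)) := by
    funext m
    have e1 : (∏ h : Fin (D+1), (c h * w) ^ m h / (((m h).factorial : ℝ) * ((m h + 1).factorial : ℝ)))
        = (∏ h : Fin (D+1), w ^ m h) *
          ∏ h : Fin (D+1), c h ^ m h / (((m h).factorial : ℝ) * ((m h + 1).factorial : ℝ)) := by
      rw [← Finset.prod_mul_distrib]
      refine Finset.prod_congr rfl fun h _ => ?_
      rw [mul_pow]; ring
    rw [e1, Finset.prod_pow_eq_pow_sum (f := m) (a := w)]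
    rw [show (∑ h, m h) + D + 1 = (∑ h, m h) + (D + 1) from by omega, pow_add]
    ring
  rw [key] at H2
  exact H2

lemma gamma_int' (n : ℕ) :
    ∫ w in Set.Ioi (0 : ℝ), Real.exp (-w) * w ^ n = n.factorial := by
  have h : (0:ℝ) < (n : ℝ) + 1 := by positivity
  have h2 := Real.Gamma_eq_integral h
  simp only [add_sub_cancel_right, Real.rpow_natCast] at h2
  rw [← h2, Real.Gamma_nat_eq_factorial]

lemma int_on' (n : ℕ) :
    IntegrableOn (fun w : ℝ => Real.exp (-w) * w ^ n) (Set.Ioi 0) := by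
  have := Real.GammaIntegral_convergent (s := (n:ℝ)+1) (by positivity)
  simpa [Real.rpow_natCast] using this

open MeasureTheory in
theorem stmt15 (D : ℕ) (c : Fin (D + 1) → ℝ) (hc : ∀ i, 0 ≤ c i) :
    HasSum
      (fun m : Fin (D + 1) → ℕ =>
        (((∑ h, m h) + D + 1).factorial : ℝ) *
          ∏ h, c h ^ m h / (((m h).factorial : ℝ) * ((m h + 1).factorial : ℝ)))
      (∫ w in Set.Ioi (0 : ℝ), Real.exp (-w) * w ^ (D + 1) *
        ∏ h : Fin (D + 1), ∑' m : ℕ, (c h * w) ^ m /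
          ((m.factorial : ℝ) * ((m + 1).factorial : ℝ))) ∧
    IntegrableOn
      (fun w : ℝ => Real.exp (-w) * w ^ (D + 1) *
        ∏ h : Fin (D + 1), ∑' m : ℕ, (c h * w) ^ m /
          ((m.factorial : ℝ) * ((m + 1).factorial : ℝ)))
      (Set.Ioi 0) := by
  -- abbreviations
  set F : (Fin (D + 1) → ℕ) → ℝ → ℝ := fun m w =>
    Real.exp (-w) * w ^ ((∑ h, m h) + D + 1) *
      ∏ h, c h ^ m h / (((m h).factorial : ℝ) * ((m h + 1).factorial : ℝ)) with hF_def
  set T : (Fin (D + 1) → ℕ) → ℝ := fun m =>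
    (((∑ h, m h) + D + 1).factorial : ℝ) *
      ∏ h, c h ^ m h / (((m h).factorial : ℝ) * ((m h + 1).factorial : ℝ)) with hT_def
  set I : ℝ → ℝ := fun w => Real.exp (-w) * w ^ (D + 1) *
    ∏ h : Fin (D + 1), ∑' m : ℕ, (c h * w) ^ m /
      ((m.factorial : ℝ) * ((m + 1).factorial : ℝ)) with hI_def
  have hprod_nonneg : ∀ m : Fin (D + 1) → ℕ,
      (0:ℝ) ≤ ∏ h, c h ^ m h / (((m h).factorial : ℝ) * ((m h + 1).factorial : ℝ)) :=
    fun m => Finset.prod_nonneg fun h _ => div_nonneg (pow_nonneg (hc h) _) (by positivity)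
  have hT_nonneg : ∀ m, 0 ≤ T m := fun m => mul_nonneg (Nat.cast_nonneg _) (hprod_nonneg m)
  have hT_sum : Summable T := T_summable D c hc
  -- integral of each F m
  have hFint : ∀ m, IntegrableOn (F m) (Set.Ioi 0) := by
    intro m
    exact (int_on' ((∑ h, m h) + D + 1)).mul_const _
  have hFval : ∀ m, (∫ w in Set.Ioi (0:ℝ), F m w) = T m := by
    intro m
    rw [hF_def, hT_def]
    simp only
    rw [MeasureTheory.integral_mul_const, gamma_int']
  have hF_nonneg : ∀ m, ∀ w : ℝ, 0 < w → 0 ≤ F m w := by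
    intro m w hw
    exact mul_nonneg (mul_nonneg (Real.exp_pos _).le (pow_nonneg hw.le _)) (hprod_nonneg m)
  have hmeas : ∀ m, AEStronglyMeasurable (F m) (volume.restrict (Set.Ioi 0)) := by
    intro m
    exact (((Real.continuous_exp.comp continuous_neg).mul (continuous_pow _)).mul
      continuous_const).aestronglyMeasurable
  have hlint : ∀ m, (∫⁻ w in Set.Ioi (0:ℝ), ‖F m w‖₊) = ENNReal.ofReal (T m) := by
    intro m
    have e1 : (∫⁻ w in Set.Ioi (0:ℝ), ‖F m w‖₊) =
        ∫⁻ w in Set.Ioi (0:ℝ), ENNReal.ofReal (F m w) := by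
      apply lintegral_congr_ae
      filter_upwards [ae_restrict_mem measurableSet_Ioi] with w hw
      exact Real.enorm_eq_ofReal (hF_nonneg m w hw)
    rw [e1, ← ofReal_integral_eq_lintegral_ofReal (hFint m)
      ((ae_restrict_iff' measurableSet_Ioi).mpr (ae_of_all _ fun w hw => hF_nonneg m w hw)),
      hFval m]
  have hne : (∑' m, ∫⁻ w in Set.Ioi (0:ℝ), ‖F m w‖₊) ≠ ⊤ := by
    rw [tsum_congr hlint, ← ENNReal.ofReal_tsum_of_nonneg hT_nonneg hT_sum]
    exact ENNReal.ofReal_ne_top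
  have hIpt : ∀ w ∈ Set.Ioi (0:ℝ), I w = ∑' m, F m w :=
    fun w hw => ((pt_hasSum D c hc w (le_of_lt hw)).tsum_eq).symm
  have key : (∫ w in Set.Ioi (0:ℝ), I w) = ∑' m, T m := by
    rw [MeasureTheory.setIntegral_congr_fun measurableSet_Ioi hIpt,
      MeasureTheory.integral_tsum hmeas hne]
    exact tsum_congr hFval
  constructor
  · exact (hT_sum.hasSum_iff).mpr key.symm
  · -- integrability
    have hg_meas : ∀ h : Fin (D+1), Measurable (fun w : ℝ =>
        ∑' m : ℕ, (c h * w) ^ m / ((m.factorial : ℝ) * ((m + 1).factorial : ℝ))) := by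
      intro h
      apply measurable_of_tendsto_metrizable' Filter.atTop
        (f := fun n => fun w : ℝ => ∑ m ∈ Finset.range n,
          (c h * w) ^ m / ((m.factorial : ℝ) * ((m + 1).factorial : ℝ)))
      · intro n
        apply Continuous.measurable
        apply continuous_finset_sum
        intro m _
        exact ((continuous_const.mul continuous_id).pow m).div_const _
      · rw [tendsto_pi_nhds]
        intro w
        exact (aux_summable (c h * w)).hasSum.tendsto_sum_nat
    have hI_meas : AEStronglyMeasurable I (volume.restrict (Set.Ioi 0)) := by
      apply Measurable.aestronglyMeasurable
      exact ((Real.measurable_exp.comp measurable_neg).mul (continuous_pow (D+1)).measurable).mul (Finset.measurable_prod Finset.univ (fun h _ => hg_meas h))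
    refine ⟨hI_meas, ?_⟩
    show (∫⁻ w in Set.Ioi (0:ℝ), (‖I w‖₊ : ENNReal)) < ⊤
    have e2 : (∫⁻ w in Set.Ioi (0:ℝ), ‖I w‖₊) = ∑' m, ∫⁻ w in Set.Ioi (0:ℝ), ‖F m w‖₊ := by
      simp only [← enorm_eq_nnnorm]
      rw [← lintegral_tsum (fun m => (hmeas m).enorm)]
      apply lintegral_congr_ae
      filter_upwards [ae_restrict_mem measurableSet_Ioi] with w hw
      rw [Real.enorm_eq_ofReal ?_, hIpt w hw,
        ENNReal.ofReal_tsum_of_nonneg (fun m => hF_nonneg m w hw)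
          (pt_hasSum D c hc w (le_of_lt hw)).summable]
      · exact tsum_congr fun m => (Real.enorm_eq_ofReal (hF_nonneg m w hw)).symm
      · rw [hIpt w hw]
        exact tsum_nonneg fun m => hF_nonneg m w hw
    rw [e2]
    exact lt_top_iff_ne_top.mpr hne
end

section
/- Let D ≥ 1 be an integer and let λ_h > 0, x_h > 0 and p_h ∈ ℝ be given for h ∈ {0,…,D}, with all indices interpreted modulo D+1 (so λ_{h+k(D+1)} = λ_h, x_{h+k(D+1)} = x_h, p_{h+k(D+1)} = p_h for k ∈ ℤ). Fix j ∈ {1,…,D}. For k ∈ {0,…,D}, interpret the product ∏_{h=k−j+1}^{k−1} over the j−1 consecutive cyclic indices k−j+1, k−j+2, …, k−1 (empty when j = 1), and the product ∏_{h=k+1}^{k+1+D−j} over the D+1−j consecutive cyclic indices k+1, …, k+1+D−j (empty when j = D+1, which does not occur here). Then Σ_{n=1}^{∞} Σ_{k=0}^{D} p_{k−j+1} · ( ∏_{h=k−j+1}^{k−1} λ_h^{n+1} x_h^{n} e^{−λ_h x_h} / n! ) · ( e^{−λ_k x_k} (λ_k x_k)^{n} / n! ) · ( ∏_{h=k+1}^{k+1+D−j}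 λ_h^{n} x_h^{n−1} e^{−λ_h x_h} / (n−1)! ) = e^{−Σ_{h=0}^{D} λ_h x_h} ( ∏_{h=0}^{D} λ_h ) Σ_{k=0}^{D} p_{k−j+1} x_k ( ∏_{h=k−j+1}^{k−1} λ_h x_h ) Σ_{n=0}^{∞} ( ∏_{h=0}^{D} λ_h x_h )^{n} / ( (n!)^{D+1−j} ((n+1)!)^{j} ), and all series involved converge absolutely. -/
open Fin.NatCast

theorem stmt16 (D j : ℕ) (hD : 1 ≤ D) (hj1 : 1 ≤ j) (hjD : j ≤ D)
    (lam x p : Fin (D + 1) → ℝ) (hlam : ∀ h, 0 < lam h) (hx : ∀ h, 0 < x h)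
    (f : ℕ → Fin (D + 1) → ℝ)
    (hf : ∀ (n : ℕ) (k : Fin (D + 1)), f n k =
      p (k - (j : Fin (D + 1)) + 1) *
      (∏ i ∈ Finset.range (j - 1),
        lam (k - (j : Fin (D + 1)) + 1 + (i : Fin (D + 1))) ^ (n + 1) *
          x (k - (j : Fin (D + 1)) + 1 + (i : Fin (D + 1))) ^ n *
          Real.exp (-(lam (k - (j : Fin (D + 1)) + 1 + (i : Fin (D + 1))) *
            x (k - (j : Fin (D + 1)) + 1 + (i : Fin (D + 1))))) / (n.factorial : ℝ)) *
      (Real.exp (-(lam k * x k)) * (lam k * x k) ^ n / (n.factorial : ℝ)) *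
      (∏ i ∈ Finset.range (D + 1 - j),
        lam (k + 1 + (i : Fin (D + 1))) ^ n * x (k + 1 + (i : Fin (D + 1))) ^ (n - 1) *
          Real.exp (-(lam (k + 1 + (i : Fin (D + 1))) * x (k + 1 + (i : Fin (D + 1))))) /
          ((n - 1).factorial : ℝ))) :
    Summable (fun n : ℕ => |∑ k : Fin (D + 1), f (n + 1) k|) ∧
    Summable (fun n : ℕ => (∏ h : Fin (D + 1), lam h * x h) ^ n /
      ((n.factorial : ℝ) ^ (D + 1 - j) * ((n + 1).factorial : ℝ) ^ j)) ∧
    ∑' n : ℕ, ∑ k : Fin (D + 1), f (n + 1) k =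
      Real.exp (-(∑ h : Fin (D + 1), lam h * x h)) * (∏ h : Fin (D + 1), lam h) *
        ∑ k : Fin (D + 1), p (k - (j : Fin (D + 1)) + 1) * x k *
          (∏ i ∈ Finset.range (j - 1),
            lam (k - (j : Fin (D + 1)) + 1 + (i : Fin (D + 1))) *
              x (k - (j : Fin (D + 1)) + 1 + (i : Fin (D + 1)))) *
          ∑' n : ℕ, (∏ h : Fin (D + 1), lam h * x h) ^ n /
            ((n.factorial : ℝ) ^ (D + 1 - j) * ((n + 1).factorial : ℝ) ^ j) := by
  obtain ⟨j', rfl⟩ : ∃ j'', j = j'' + 1 := ⟨j - 1, by omega⟩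
  simp only [Nat.add_sub_cancel, Nat.add_sub_add_right] at hf ⊢
  set z : ℝ := ∏ h : Fin (D + 1), lam h * x h with hzdef
  have hzpos : 0 < z := Finset.prod_pos fun h _ => mul_pos (hlam h) (hx h)
  set a : ℕ → ℝ := fun n => z ^ n /
      ((n.factorial : ℝ) ^ (D - j') * ((n + 1).factorial : ℝ) ^ (j' + 1)) with hadef
  have hfac1 : ∀ m : ℕ, (1 : ℝ) ≤ (m.factorial : ℝ) := fun m => by
    exact_mod_cast m.factorial_pos
  have ha_nonneg : ∀ n, 0 ≤ a n := fun n =>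
    div_nonneg (pow_nonneg hzpos.le _)
      (mul_nonneg (pow_nonneg (by linarith [hfac1 n]) _)
        (pow_nonneg (by linarith [hfac1 (n + 1)]) _))
  have ha_sum : Summable a := by
    refine Summable.of_nonneg_of_le ha_nonneg (fun n => ?_)
      (Real.summable_pow_div_factorial z)
    have hB : (n.factorial : ℝ) ≤
        (n.factorial : ℝ) ^ (D - j') * ((n + 1).factorial : ℝ) ^ (j' + 1) := by
      calc (n.factorial : ℝ) ≤ (n.factorial : ℝ) ^ (D - j') :=
            le_self_pow₀ (hfac1 n) (by omega)
        _ ≤ _ := le_mul_of_one_le_right (by positivity) (one_le_pow₀ (hfac1 (n + 1)))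
    simp only [hadef]
    gcongr
  -- the key pointwise identity
  have key : ∀ (n : ℕ) (k : Fin (D + 1)), f (n + 1) k =
      (Real.exp (-(∑ h : Fin (D + 1), lam h * x h)) * ∏ h : Fin (D + 1), lam h) *
        (p (k - ((j' + 1 : ℕ) : Fin (D + 1)) + 1) * x k *
          ∏ i ∈ Finset.range j',
            lam (k - ((j' + 1 : ℕ) : Fin (D + 1)) + 1 + (i : Fin (D + 1))) *
              x (k - ((j' + 1 : ℕ) : Fin (D + 1)) + 1 + (i : Fin (D + 1)))) * a n := by
    intro n k
    set c : Fin (D + 1) := k - ((j' + 1 : ℕ) : Fin (D + 1)) + 1 with hc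
    set g : Fin (D + 1) → ℝ :=
      fun h => lam h ^ (n + 1) * x h ^ n * Real.exp (-(lam h * x h)) with hg
    have hk : c + ((j' : ℕ) : Fin (D + 1)) = k := by
      rw [hc]; push_cast; abel
    have hidx : ∀ i : ℕ, c + ((j' + 1 + i : ℕ) : Fin (D + 1)) = k + 1 + (i : Fin (D + 1)) := by
      intro i; rw [hc]; push_cast; abel
    have h1 : ∏ i ∈ Finset.range (D + 1), g (c + (i : Fin (D + 1))) = ∏ h : Fin (D + 1), g h := by
      rw [← Fin.prod_univ_eq_prod_range (fun i : ℕ => g (c + (i : Fin (D + 1)))) (D + 1)]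
      simp only [Fin.cast_val_eq_self]
      simpa using Equiv.prod_comp (Equiv.addLeft c) g
    have h2 := Finset.prod_range_add (fun i : ℕ => g (c + (i : Fin (D + 1)))) (j' + 1) (D - j')
    rw [show j' + 1 + (D - j') = D + 1 from by omega] at h2
    have hsplit : (∏ i ∈ Finset.range j', g (c + (i : Fin (D + 1)))) * g k *
        (∏ i ∈ Finset.range (D - j'), g (k + 1 + (i : Fin (D + 1)))) = ∏ h : Fin (D + 1), g h := by
      rw [← h1, h2, Finset.prod_range_succ, hk]
      congr 1
      exact Finset.prod_congr rfl fun i _ => by rw [hidx i]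
    have hgprod : ∏ h : Fin (D + 1), g h =
        (∏ h : Fin (D + 1), lam h) * z ^ n * Real.exp (-(∑ h : Fin (D + 1), lam h * x h)) := by
      have e1 : ∀ h ∈ Finset.univ, g h =
          lam h * (lam h * x h) ^ n * Real.exp (-(lam h * x h)) := fun h _ => by
        simp only [hg]; ring
      rw [Finset.prod_congr rfl e1, Finset.prod_mul_distrib, Finset.prod_mul_distrib,
        Finset.prod_pow, ← Real.exp_sum, hzdef]
      congr 2
      rw [← Finset.sum_neg_distrib]
    have hG := hsplit.trans hgprod
    have hb1 : ∏ i ∈ Finset.range j',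
        lam (c + (i : Fin (D + 1))) ^ (n + 1 + 1) * x (c + (i : Fin (D + 1))) ^ (n + 1) *
          Real.exp (-(lam (c + (i : Fin (D + 1))) * x (c + (i : Fin (D + 1))))) /
          ((n + 1).factorial : ℝ)
        = (∏ i ∈ Finset.range j', lam (c + (i : Fin (D + 1))) * x (c + (i : Fin (D + 1)))) *
          (∏ i ∈ Finset.range j', g (c + (i : Fin (D + 1)))) *
          ((((n + 1).factorial : ℝ))⁻¹) ^ j' := by
      rw [show ((((n + 1).factorial : ℝ))⁻¹) ^ j' =
          ∏ _i ∈ Finset.range j', (((n + 1).factorial : ℝ))⁻¹ from by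
        rw [Finset.prod_const, Finset.card_range], ← Finset.prod_mul_distrib,
        ← Finset.prod_mul_distrib]
      exact Finset.prod_congr rfl fun i _ => by simp only [hg]; ring
    have hmid : Real.exp (-(lam k * x k)) * (lam k * x k) ^ (n + 1) / ((n + 1).factorial : ℝ)
        = x k * g k * (((n + 1).factorial : ℝ))⁻¹ := by
      simp only [hg]; ring
    have hb3 : ∏ i ∈ Finset.range (D - j'),
        lam (k + 1 + (i : Fin (D + 1))) ^ (n + 1) * x (k + 1 + (i : Fin (D + 1))) ^ n *
          Real.exp (-(lam (k + 1 + (i : Fin (D + 1))) * x (k + 1 + (i : Fin (D + 1))))) /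
          (n.factorial : ℝ)
        = (∏ i ∈ Finset.range (D - j'), g (k + 1 + (i : Fin (D + 1)))) *
          (((n.factorial : ℝ))⁻¹) ^ (D - j') := by
      rw [show (((n.factorial : ℝ))⁻¹) ^ (D - j') =
          ∏ _i ∈ Finset.range (D - j'), ((n.factorial : ℝ))⁻¹ from by
        rw [Finset.prod_const, Finset.card_range], ← Finset.prod_mul_distrib]
      exact Finset.prod_congr rfl fun i _ => by simp only [hg]; ring
    rw [hf (n + 1) k]
    simp only [Nat.add_sub_cancel]
    rw [hb1, hmid, hb3, hadef]
    linear_combination (p c * x k *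
      (∏ i ∈ Finset.range j', lam (c + (i : Fin (D + 1))) * x (c + (i : Fin (D + 1)))) *
      ((((n + 1).factorial : ℝ))⁻¹) ^ (j' + 1) * (((n.factorial : ℝ))⁻¹) ^ (D - j')) * hG
  -- assemble
  have hsum_eq : ∀ n : ℕ, (∑ k : Fin (D + 1), f (n + 1) k) =
      (Real.exp (-(∑ h : Fin (D + 1), lam h * x h)) * ∏ h : Fin (D + 1), lam h) *
        (∑ k : Fin (D + 1), p (k - ((j' + 1 : ℕ) : Fin (D + 1)) + 1) * x k *
          ∏ i ∈ Finset.range j',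
            lam (k - ((j' + 1 : ℕ) : Fin (D + 1)) + 1 + (i : Fin (D + 1))) *
              x (k - ((j' + 1 : ℕ) : Fin (D + 1)) + 1 + (i : Fin (D + 1)))) * a n := by
    intro n
    rw [Finset.sum_congr rfl fun k _ => key n k, ← Finset.sum_mul, ← Finset.mul_sum]
  have hS : Summable (fun n : ℕ => ∑ k : Fin (D + 1), f (n + 1) k) := by
    refine Summable.congr (ha_sum.mul_left _) fun n => (hsum_eq n).symm
  refine ⟨hS.abs, ha_sum, ?_⟩
  rw [tsum_congr hsum_eq, tsum_mul_left, ← Finset.sum_mul]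
  ring
end
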